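/- At most d²−1 unitary operator bases of M_d(ℂ) can be pairwise mutually unbiased. -/

import Mathlib

open Matrix

namespace MUBAux


variable {d : ℕ}

/-- The vectorization of `A ⊗ conj A` as a function on index pairs. -/
def vvec (A : Matrix (Fin d) (Fin d) ℂ) : (Fin d × Fin d) × (Fin d × Fin d) → ℂ :=
  fun x => A x.1.1 x.1.2 * (starRingEnd ℂ) (A x.2.1 x.2.2)

/-- Hilbert–Schmidt style inner product on functions. -/
noncomputable def dot (x y : (Fin d × Fin d) × (Fin d × Fin d) → ℂ) : ℂ :=
  ∑ i, (starRingEnd ℂ) (x i) * y i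

def e1 (c : Fin d × Fin d) : (Fin d × Fin d) × (Fin d × Fin d) → ℂ :=
  fun x => if x.1.1 = c.1 ∧ x.2.1 = c.2 ∧ x.1.2 = x.2.2 then 1 else 0

def e2 (c : Fin d × Fin d) : (Fin d × Fin d) × (Fin d × Fin d) → ℂ :=
  fun x => if x.1.2 = c.1 ∧ x.2.2 = c.2 ∧ x.1.1 = x.2.1 then 1 else 0

lemma trace_conjTranspose_mul (A C : Matrix (Fin d) (Fin d) ℂ) :
    (Aᴴ * C).trace = ∑ p : Fin d × Fin d, (starRingEnd ℂ) (A p.1 p.2) * C p.1 p.2 := by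
  rw [Fintype.sum_prod_type]
  simp only [Matrix.trace, Matrix.diag, Matrix.mul_apply, Matrix.conjTranspose_apply]
  rw [Finset.sum_comm]
  simp [RCLike.star_def]

lemma dot_vvec_vvec (A C : Matrix (Fin d) (Fin d) ℂ) :
    dot (vvec A) (vvec C) = (Aᴴ * C).trace * (starRingEnd ℂ) ((Aᴴ * C).trace) := by
  rw [trace_conjTranspose_mul, map_sum, Finset.sum_mul_sum]
  rw [dot, Fintype.sum_prod_type]
  congr 1; ext p
  congr 1; ext r
  simp only [vvec, _root_.map_mul, Complex.conj_conj]
  ring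

lemma dot_vvec_e1 (A : Matrix (Fin d) (Fin d) ℂ) (c : Fin d × Fin d) :
    dot (vvec A) (e1 c) = (starRingEnd ℂ) ((A * Aᴴ) c.1 c.2) := by
  simp only [dot, e1, vvec, Fintype.sum_prod_type, mul_ite, mul_one, mul_zero, ite_and,
    Finset.sum_ite_eq, Finset.sum_ite_eq', Finset.mem_univ, if_true,
    Matrix.mul_apply, Matrix.conjTranspose_apply, map_sum, _root_.map_mul, Complex.conj_conj,
    RCLike.star_def]
  simp only [Finset.sum_ite_irrel, Finset.sum_ite_eq, Finset.sum_ite_eq', Finset.mem_univ,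
    if_true, Finset.sum_const_zero]


lemma dot_vvec_e2 (A : Matrix (Fin d) (Fin d) ℂ) (c : Fin d × Fin d) :
    dot (vvec A) (e2 c) = (starRingEnd ℂ) ((Aᴴ * A) c.2 c.1) := by
  simp only [dot, e2, vvec, Fintype.sum_prod_type, mul_ite, mul_one, mul_zero, ite_and,
    Finset.sum_ite_eq, Finset.sum_ite_eq', Finset.mem_univ, if_true,
    Matrix.mul_apply, Matrix.conjTranspose_apply, map_sum, _root_.map_mul, Complex.conj_conj,
    RCLike.star_def]
  simp only [Finset.sum_ite_irrel, Finset.sum_ite_eq, Finset.sum_ite_eq', Finset.mem_univ,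
    if_true, Finset.sum_const_zero]
  exact Finset.sum_congr rfl fun q _ => by ring

lemma dot_zero_right (x : (Fin d × Fin d) × (Fin d × Fin d) → ℂ) : dot x 0 = 0 := by
  simp [dot]

lemma dot_sub_left (x y z : (Fin d × Fin d) × (Fin d × Fin d) → ℂ) :
    dot (x - y) z = dot x z - dot y z := by
  simp [dot, sub_mul, Finset.sum_sub_distrib]

lemma dot_sub_right (x y z : (Fin d × Fin d) × (Fin d × Fin d) → ℂ) :
    dot x (y - z) = dot x y - dot x z := by
  simp [dot, mul_sub, Finset.sum_sub_distrib]

lemma dot_sum_smul {ι : Type*} [Fintype ι] (x : (Fin d × Fin d) × (Fin d × Fin d) → ℂ)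
    (g : ι → ℂ) (F : ι → ((Fin d × Fin d) × (Fin d × Fin d) → ℂ)) :
    dot x (∑ i, g i • F i) = ∑ i, g i * dot x (F i) := by
  simp only [dot, Finset.sum_apply, Pi.smul_apply, smul_eq_mul, Finset.mul_sum]
  rw [Finset.sum_comm]
  exact Finset.sum_congr rfl fun i _ => Finset.sum_congr rfl fun t _ => by ring


theorem main {d m : ℕ} (hd : 1 < d)
    (v : Fin m → Fin (d ^ 2) → ((Fin d × Fin d) × (Fin d × Fin d) → ℂ))
    (hvv : ∀ a b j k, dot (v a j) (v b k)
      = if a = b then (if j = k then ((d : ℂ)) ^ 2 else 0) else 1)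
    (hv1 : ∀ a j c, dot (v a j) (e1 c) = if c.1 = c.2 then 1 else 0)
    (hv2 : ∀ a j c, dot (v a j) (e2 c) = if c.1 = c.2 then 1 else 0) :
    m ≤ d ^ 2 - 1 := by
  haveI : NeZero d := ⟨by omega⟩
  have hd2 : 0 < d ^ 2 := by positivity
  set j₀ : Fin (d ^ 2) := ⟨0, hd2⟩ with hj₀
  set S := {j : Fin (d ^ 2) // j ≠ j₀} with hS
  set F : (Fin m × S) ⊕ ((Fin d × Fin d) ⊕ {c : Fin d × Fin d // c ≠ (0, 0)}) →
      ((Fin d × Fin d) × (Fin d × Fin d) → ℂ) :=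
    Sum.elim (fun p => v p.1 p.2.val - v p.1 j₀)
      (Sum.elim (fun c => e1 c) (fun r => e2 r.val)) with hF
  have hNe : ((d : ℂ)) ^ 2 ≠ 0 := by
    apply pow_ne_zero; exact Nat.cast_ne_zero.mpr (by omega)
  -- inner products among the `w` vectors
  have hww : ∀ b a (k j : Fin (d ^ 2)), k ≠ j₀ → j ≠ j₀ →
      dot (v b k - v b j₀) (v a j - v a j₀)
        = if b = a then ((if k = j then ((d : ℂ)) ^ 2 else 0) + ((d : ℂ)) ^ 2) else 0 := by
    intro b a k j hk hj
    rw [dot_sub_left, dot_sub_right, dot_sub_right, hvv, hvv, hvv, hvv]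
    by_cases hba : b = a <;> simp [hba, hk, Ne.symm hj]
  have hwe1 : ∀ b (k : Fin (d ^ 2)) c, dot (v b k - v b j₀) (e1 c) = 0 := by
    intro b k c; rw [dot_sub_left, hv1, hv1, sub_self]
  have hwe2 : ∀ b (k : Fin (d ^ 2)) c, dot (v b k - v b j₀) (e2 c) = 0 := by
    intro b k c; rw [dot_sub_left, hv2, hv2, sub_self]
  have hli : LinearIndependent ℂ F := by
    rw [Fintype.linearIndependent_iff]
    intro g hg
    -- step 1 : the coefficients on the `w` part vanish
    have key : ∀ (b : Fin m) (k : S),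
        g (Sum.inl (b, k)) * ((d : ℂ)) ^ 2 + (∑ j : S, g (Sum.inl (b, j))) * ((d : ℂ)) ^ 2
          = 0 := by
      intro b k
      have h0 := dot_sum_smul (v b k.val - v b j₀) g F
      rw [hg, dot_zero_right] at h0
      rw [Fintype.sum_sum_type, Fintype.sum_sum_type, Fintype.sum_prod_type] at h0
      simp only [hF, Sum.elim_inl, Sum.elim_inr, hwe1, hwe2, mul_zero,
        Finset.sum_const_zero, add_zero] at h0
      rw [Finset.sum_congr rfl (fun a _ => Finset.sum_congr rfl (fun j _ => by
          rw [hww b a k.val j.val k.prop j.prop]))] at h0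
      simp only [mul_ite, mul_zero, Finset.sum_ite_irrel, Finset.sum_const_zero,
        Finset.sum_ite_eq, Finset.mem_univ, if_true] at h0
      simp only [mul_add, Finset.sum_add_distrib, Subtype.coe_inj, mul_ite, mul_zero,
        Finset.sum_ite_eq, Finset.mem_univ, if_true, ← Finset.sum_mul] at h0
      linear_combination -h0
    have hg1 : ∀ (b : Fin m) (k : S), g (Sum.inl (b, k)) = 0 := by
      intro b k
      have hconst : ∀ k : S, g (Sum.inl (b, k)) = -(∑ j : S, g (Sum.inl (b, j))) := by
        intro k
        have h := key b k
        have h2 : (g (Sum.inl (b, k)) + ∑ j : S, g (Sum.inl (b, j))) * ((d : ℂ)) ^ 2 = 0 := by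
          linear_combination h
        rcases mul_eq_zero.mp h2 with h3 | h3
        · linear_combination h3
        · exact absurd h3 hNe
      have hsum : (∑ j : S, g (Sum.inl (b, j))) = 0 := by
        have h4 : (∑ j : S, g (Sum.inl (b, j)))
            = (Fintype.card S : ℂ) * (-(∑ j : S, g (Sum.inl (b, j)))) := by
          conv_lhs => rw [Finset.sum_congr rfl (fun j _ => hconst j)]
          rw [Finset.sum_const, Finset.card_univ, nsmul_eq_mul]
        have h5 : ((1 : ℂ) + (Fintype.card S : ℂ)) * (∑ j : S, g (Sum.inl (b, j))) = 0 := by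
          linear_combination h4
        have h6 : ((1 : ℂ) + (Fintype.card S : ℂ)) ≠ 0 := by
          have : ((1 + Fintype.card S : ℕ) : ℂ) ≠ 0 := Nat.cast_ne_zero.mpr (by omega)
          simpa using this
        exact (mul_eq_zero.mp h5).resolve_left h6
      rw [hconst k, hsum, neg_zero]
    -- step 2 : the coefficients on the `e` part vanish
    have hsum2 : (∑ c : Fin d × Fin d, g (Sum.inr (Sum.inl c)) • e1 c)
        + (∑ r : {c : Fin d × Fin d // c ≠ (0, 0)}, g (Sum.inr (Sum.inr r)) • e2 r.val)
        = 0 := by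
      rw [Fintype.sum_sum_type, Fintype.sum_sum_type] at hg
      simpa [hF, hg1] using hg
    have hpt : ∀ x : (Fin d × Fin d) × (Fin d × Fin d),
        (∑ c : Fin d × Fin d, g (Sum.inr (Sum.inl c)) * e1 c x)
          + (∑ r : {c : Fin d × Fin d // c ≠ (0, 0)}, g (Sum.inr (Sum.inr r)) * e2 r.val x)
          = 0 := by
      intro x
      have := congrFun hsum2 x
      simpa [Finset.sum_apply] using this
    have hg2 : ∀ c : Fin d × Fin d, g (Sum.inr (Sum.inl c)) = 0 := by
      intro c
      have h := hpt ((c.1, (0 : Fin d)), (c.2, (0 : Fin d)))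
      simp only [e1, e2] at h
      have hz : (∑ x : {c : Fin d × Fin d // c ≠ (0, 0)}, g (Sum.inr (Sum.inr x)) *
          (if (0 : Fin d) = (x : Fin d × Fin d).1 ∧ (0 : Fin d) = (x : Fin d × Fin d).2
            ∧ c.1 = c.2 then (1 : ℂ) else 0)) = 0 :=
        Finset.sum_eq_zero fun x _ => by
          rw [if_neg, mul_zero]
          rintro ⟨h1, h2, -⟩
          exact x.prop (Prod.ext h1.symm h2.symm)
      rw [hz, add_zero] at h
      rw [← h]
      rw [Fintype.sum_prod_type]
      simp only [mul_ite, mul_one, mul_zero, ite_and, eq_self_iff_true, if_true,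
        Finset.sum_ite_irrel, Finset.sum_const_zero, Finset.sum_ite_eq, Finset.sum_ite_eq',
        Finset.mem_univ]
    have hg3 : ∀ r : {c : Fin d × Fin d // c ≠ (0, 0)}, g (Sum.inr (Sum.inr r)) = 0 := by
      intro r
      have h := hpt (((0 : Fin d), (r : Fin d × Fin d).1), ((0 : Fin d), (r : Fin d × Fin d).2))
      simp only [e1, e2, hg2, zero_mul, Finset.sum_const_zero, zero_add] at h
      rw [← h]
      rw [Finset.sum_eq_single r]
      · simp
      · intro x _ hx
        rw [if_neg, mul_zero]
        rintro ⟨h1, h2, -⟩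
        exact hx (Subtype.ext (Prod.ext h1.symm h2.symm))
      · intro hr; exact absurd (Finset.mem_univ r) hr
    intro i
    rcases i with ⟨a, j⟩ | c | r
    · exact hg1 a j
    · exact hg2 c
    · exact hg3 r
  -- conclusion: cardinality bound
  have hcard := hli.fintype_card_le_finrank
  rw [Module.finrank_fintype_fun_eq_card] at hcard
  simp only [Fintype.card_sum, Fintype.card_prod, Fintype.card_fin] at hcard
  have hcS : Fintype.card S = d ^ 2 - 1 := by
    have := Set.card_ne_eq (j₀ : Fin (d ^ 2))
    simpa [hS] using this
  have hcS2 : Fintype.card {c : Fin d × Fin d // c ≠ (0, 0)} = d * d - 1 := by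
    have := Set.card_ne_eq (((0 : Fin d), (0 : Fin d)))
    simpa using this
  rw [hcS, hcS2] at hcard
  -- now : m * (d ^ 2 - 1) + (d * d + (d * d - 1)) ≤ d * d * (d * d)
  obtain ⟨E, hE⟩ : ∃ E, d ^ 2 = E + 1 := ⟨d ^ 2 - 1, by omega⟩
  have hdd : d * d = d ^ 2 := by ring
  rw [hdd, hE] at hcard
  simp only [Nat.add_sub_cancel] at hcard
  rw [hE]; simp only [Nat.add_sub_cancel]
  by_contra hmle
  push_neg at hmle
  have : (E + 1) * E ≤ m * E := Nat.mul_le_mul_right _ (by omega)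
  nlinarith

end MUBAux

/-- At most `d² − 1` unitary operator bases of `M_d(ℂ)` can be pairwise mutually
unbiased: if `B₀, …, B_{m−1}` are unitary operator bases (`tr(U_j†U_k) = d δ_{jk}`
within each basis) with `|tr(U†V)|² = 1` for all elements `U, V` of distinct bases,
then `m ≤ d² − 1`. -/
theorem card_mutually_unbiased_unitary_bases_le (d m : ℕ) (hd : 1 < d)
    (B : Fin m → Fin (d ^ 2) → Matrix.unitaryGroup (Fin d) ℂ)
    (hbasis : ∀ a, ∀ j k : Fin (d ^ 2),
      ((B a j : Matrix (Fin d) (Fin d) ℂ)ᴴ * (B a k : Matrix (Fin d) (Fin d) ℂ)).trace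
        = if j = k then (d : ℂ) else 0)
    (hmub : ∀ a b, a ≠ b → ∀ j k : Fin (d ^ 2),
      ‖((B a j : Matrix (Fin d) (Fin d) ℂ)ᴴ * (B b k : Matrix (Fin d) (Fin d) ℂ)).trace‖ ^ 2
        = 1) :
    m ≤ d ^ 2 - 1 := by
  have hstar : ∀ a j, star ((B a j : Matrix (Fin d) (Fin d) ℂ))
      = (B a j : Matrix (Fin d) (Fin d) ℂ)ᴴ := fun a j => rfl
  apply MUBAux.main hd (fun a j => MUBAux.vvec (B a j : Matrix (Fin d) (Fin d) ℂ))
  · intro a b j k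
    rw [MUBAux.dot_vvec_vvec]
    by_cases hab : a = b
    · subst hab
      rw [hbasis a j k, if_pos rfl]
      by_cases hjk : j = k
      · simp only [hjk, eq_self_iff_true, if_true, Complex.conj_natCast]
        ring
      · simp [hjk]
    · rw [if_neg hab, Complex.mul_conj, Complex.normSq_eq_norm_sq, hmub a b hab j k]
      norm_num
  · intro a j c
    rw [MUBAux.dot_vvec_e1]
    have h1 : (B a j : Matrix (Fin d) (Fin d) ℂ) * (B a j : Matrix (Fin d) (Fin d) ℂ)ᴴ = 1 := by
      rw [← hstar]
      exact (B a j).2.2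
    rw [h1, Matrix.one_apply]
    by_cases h : c.1 = c.2 <;> simp [h]
  · intro a j c
    rw [MUBAux.dot_vvec_e2]
    have h1 : (B a j : Matrix (Fin d) (Fin d) ℂ)ᴴ * (B a j : Matrix (Fin d) (Fin d) ℂ) = 1 := by
      rw [← hstar]
      exact (B a j).2.1
    rw [h1, Matrix.one_apply]
    rcases eq_or_ne c.1 c.2 with h | h
    · simp [h]
    · simp [h, Ne.symm h]
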